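/- Let G be a 2-edge-connected graph with \delta(G) > (\alpha(G) + 4)/2, let e be an edge of G and let G' = G - e. If X is a vertex subset of G' with |X| \geq 2 satisfying sun(G' - X) \geq 2|X| - \varepsilon(X) + 1, then \delta(G) \leq |X| + 1. -/

import Mathlib

open SimpleGraph

section Defs

variable {V : Type*} {α β : Type*}

/-- A graph is *factor-critical* if deleting any vertex leaves a graph
with a perfect matching. -/
def FactorCritical (G : SimpleGraph V) : Prop :=
  ∀ v : V, ∃ M : (G.induce {u | u ≠ v}).Subgraph, M.IsPerfectMatching

/-- A *sun* is `K₁`, `K₂`, or a graph obtained from a factor-critical graph `R`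
with vertex set `Y = {y₁, …, yₙ}` by adding `n` new vertices `x₁, …, xₙ` and the
pendant edges `y₁x₁, …, yₙxₙ`. -/
def IsSun (G : SimpleGraph V) : Prop :=
  (Nat.card V = 1) ∨ (Nat.card V = 2 ∧ G.Connected) ∨
  (∃ Y : Set V, Y.Nonempty ∧ FactorCritical (G.induce Y) ∧
    ∃ f : (Yᶜ : Set V) ≃ Y, ∀ x : (Yᶜ : Set V), G.neighborSet ↑x = {(↑(f x) : V)})

/-- `sunCount G` is the number of connected components of `G` that are suns. -/
noncomputable def sunCount (G : SimpleGraph V) : ℕ :=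
  Nat.card {c : G.ConnectedComponent // IsSun (G.induce c.supp)}

/-- Number of isolated vertices of a graph. -/
noncomputable def isolatedCount (G : SimpleGraph V) : ℕ :=
  {v : V | ∀ w : V, ¬ G.Adj v w}.ncard

/-- A set of vertices is independent if no two of its vertices are adjacent. -/
def IndepSet (G : SimpleGraph V) (A : Set V) : Prop :=
  A.Pairwise fun u v => ¬ G.Adj u v

/-- The independence number of a graph: the maximum size of an independent set. -/
noncomputable def indepNum (G : SimpleGraph V) : ℕ :=
  sSup {n | ∃ A : Set V, IndepSet G A ∧ A.ncard = n}

/-- The neighborhood `N_G(A)` of a set `A` of vertices: the union of the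
neighborhoods of the vertices of `A`. -/
def neighborSetOf (G : SimpleGraph V) (A : Set V) : Set V :=
  {v | ∃ a ∈ A, G.Adj a v}

/-- `H` is a `P_{≥3}`-factor of `G`: a spanning subgraph of `G` each of whose
connected components is a path on at least `3` vertices. -/
def IsPathFactor (G H : SimpleGraph V) : Prop :=
  H ≤ G ∧ ∀ c : H.ConnectedComponent,
    ∃ n : ℕ, 3 ≤ n ∧ Nonempty ((H.induce c.supp) ≃g pathGraph n)

/-- A connected graph `G` is a `P_{≥3}`-factor covered graph if every edge of `G`
is contained in some `P_{≥3}`-factor of `G`. -/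
def PathFactorCovered (G : SimpleGraph V) : Prop :=
  G.Connected ∧ ∀ e ∈ G.edgeSet, ∃ H : SimpleGraph V, IsPathFactor G H ∧ e ∈ H.edgeSet

/-- A graph `G` is a `P_{≥3}`-factor uniform graph if `G - e` is a
`P_{≥3}`-factor covered graph for every edge `e` of `G`. -/
def PathFactorUniform (G : SimpleGraph V) : Prop :=
  ∀ e ∈ G.edgeSet, PathFactorCovered (G.deleteEdges {e})

/-- The parameter `ε(X)` from Zhou–Zhang's characterization of
`P_{≥3}`-factor covered graphs. -/
noncomputable def eps (G : SimpleGraph V) (X : Set V) : ℕ := by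
  classical
  exact if ¬ IndepSet G X then 2
    else if X.Nonempty ∧ ∃ c : (G.induce Xᶜ).ConnectedComponent,
        ¬ IsSun ((G.induce Xᶜ).induce c.supp) then 1
    else 0

/-- A graph is 2-edge-connected if it is connected and stays connected after
the deletion of any single edge. -/
def TwoEdgeConnected (G : SimpleGraph V) : Prop :=
  G.Connected ∧ ∀ e ∈ G.edgeSet, (G.deleteEdges {e}).Connected

/-- A graph is `k`-connected if it has more than `k` vertices and remains
connected after deleting any fewer than `k` vertices. -/
def KConnected [Fintype V] (k : ℕ) (G : SimpleGraph V) : Prop :=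
  k < Fintype.card V ∧ ∀ S : Set V, S.ncard < k → (G.induce Sᶜ).Connected

/-- The join `G₁ ∨ G₂` of two graphs: take disjoint copies of `G₁` and `G₂`
and add all edges between them. -/
def graphJoin (G : SimpleGraph α) (H : SimpleGraph β) : SimpleGraph (α ⊕ β) where
  Adj x y :=
    match x, y with
    | Sum.inl a, Sum.inl b => G.Adj a b
    | Sum.inr a, Sum.inr b => H.Adj a b
    | Sum.inl _, Sum.inr _ => True
    | Sum.inr _, Sum.inl _ => True
  symm := ⟨by
    rintro (a | a) (b | b) h
    · exact G.adj_symm h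
    · trivial
    · trivial
    · exact H.adj_symm h⟩
  loopless := ⟨by
    rintro (a | a) h
    · exact G.loopless.irrefl a h
    · exact H.loopless.irrefl a h⟩

/-- The disjoint union of two graphs. -/
def graphSum (G : SimpleGraph α) (H : SimpleGraph β) : SimpleGraph (α ⊕ β) where
  Adj x y :=
    match x, y with
    | Sum.inl a, Sum.inl b => G.Adj a b
    | Sum.inr a, Sum.inr b => H.Adj a b
    | _, _ => False
  symm := ⟨by
    rintro (a | a) (b | b) h
    · exact G.adj_symm h
    · exact h.elim
    · exact h.elim
    · exact H.adj_symm h⟩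
  loopless := ⟨by
    rintro (a | a) h
    · exact G.loopless.irrefl a h
    · exact H.loopless.irrefl a h⟩

/-- `mK2 m` is the disjoint union of `m` copies of `K₂`. -/
def mK2 (m : ℕ) : SimpleGraph (Fin m × Fin 2) where
  Adj p q := p.1 = q.1 ∧ p.2 ≠ q.2
  symm := ⟨by rintro p q ⟨h1, h2⟩; exact ⟨h1.symm, h2.symm⟩⟩
  loopless := ⟨by rintro p ⟨h1, h2⟩; exact h2 rfl⟩

end Defs

lemma sun_low {W : Type*} (K : SimpleGraph W) (h : IsSun K) :
    ∃ v : W, ∀ w₁ w₂ : W, K.Adj v w₁ → K.Adj v w₂ → w₁ = w₂ := by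
  rcases h with h1 | ⟨h2, _⟩ | ⟨Y, hYne, _, f, hf⟩
  · obtain ⟨hsub, ⟨v⟩⟩ := Nat.card_eq_one_iff_unique.mp h1
    exact ⟨v, fun w₁ w₂ _ _ => hsub.elim w₁ w₂⟩
  · obtain ⟨x, y, hxy, huniv⟩ := Nat.card_eq_two_iff.mp h2
    refine ⟨x, fun w₁ w₂ h1 h2 => ?_⟩
    have hw1 : w₁ = x ∨ w₁ = y := by
      have : w₁ ∈ ({x, y} : Set W) := huniv ▸ Set.mem_univ _
      simpa using this
    have hw2 : w₂ = x ∨ w₂ = y := by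
      have : w₂ ∈ ({x, y} : Set W) := huniv ▸ Set.mem_univ _
      simpa using this
    rcases hw1 with rfl | rfl
    · exact absurd rfl h1.ne
    rcases hw2 with rfl | rfl
    · exact absurd rfl h2.ne
    rfl
  · obtain ⟨y, hy⟩ := hYne
    set x : (Yᶜ : Set W) := f.symm ⟨y, hy⟩ with hx
    refine ⟨↑x, fun w₁ w₂ h1 h2 => ?_⟩
    have e1 : w₁ ∈ K.neighborSet ↑x := h1
    have e2 : w₂ ∈ K.neighborSet ↑x := h2
    rw [hf x] at e1 e2
    rw [e1, e2]

/-- **Claim 3 in the proof of Theorem 1.3.** Let `G` be 2-edge-connected with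
`δ(G) > (α(G)+4)/2`, let `e ∈ E(G)` and `G' = G - e`. If `X ⊆ V(G')` with `|X| ≥ 2`
satisfies `sun(G' - X) ≥ 2|X| - ε(X) + 1`, then `δ(G) ≤ |X| + 1`. -/
theorem stmt10 {V : Type*} [Fintype V] (G : SimpleGraph V) [DecidableRel G.Adj]
    (h2ec : TwoEdgeConnected G)
    (hdeg : (G.minDegree : ℝ) > ((_root_.indepNum G : ℝ) + 4) / 2)
    (e : Sym2 V) (he : e ∈ G.edgeSet) (X : Set V) (hX2 : 2 ≤ X.ncard)
    (hX : (sunCount ((G.deleteEdges {e}).induce Xᶜ) : ℤ) ≥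
      2 * X.ncard - eps (G.deleteEdges {e}) X + 1) :
    G.minDegree ≤ X.ncard + 1 := by
  classical
  obtain ⟨a, b, rfl⟩ : ∃ a b, e = s(a, b) := by
    induction e using Sym2.ind with | _ a b => exact ⟨a, b, rfl⟩
  set G' := G.deleteEdges {s(a, b)} with hG'
  set H := G'.induce Xᶜ with hH
  have heps : eps G' X ≤ 2 := by unfold eps; split_ifs <;> omega
  have hsc : 3 ≤ sunCount H := by
    have h1 : (eps G' X : ℤ) ≤ 2 := by exact_mod_cast heps
    have h2 : (2 : ℤ) ≤ (X.ncard : ℤ) := by exact_mod_cast hX2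
    omega
  have hpick : ∀ c : {c : H.ConnectedComponent // IsSun (H.induce c.supp)},
      ∃ v : ↥c.1.supp, ∀ w₁ w₂, (H.induce c.1.supp).Adj v w₁ →
        (H.induce c.1.supp).Adj v w₂ → w₁ = w₂ :=
    fun c => sun_low _ c.2
  choose p hp using hpick
  set P : {c : H.ConnectedComponent // IsSun (H.induce c.supp)} → V :=
    fun c => ((p c : ↥Xᶜ) : V) with hP
  have hinj : Function.Injective P := by
    intro c₁ c₂ hpc
    have h1 : ((p c₁ : ↥Xᶜ)) = ((p c₂ : ↥Xᶜ)) := Subtype.ext hpc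
    have m1 : (p c₁ : ↥Xᶜ) ∈ c₁.1.supp := (p c₁).2
    have m2 : (p c₂ : ↥Xᶜ) ∈ c₂.1.supp := (p c₂).2
    rw [SimpleGraph.ConnectedComponent.mem_supp_iff] at m1 m2
    exact Subtype.ext (m1 ▸ m2 ▸ h1 ▸ rfl)
  have hrange : 3 ≤ (Set.range P).ncard := by
    rw [← Nat.card_coe_set_eq, Nat.card_range_of_injective hinj]
    exact hsc
  have hvex : ∃ v ∈ Set.range P, v ≠ a ∧ v ≠ b := by
    by_contra hcon
    push_neg at hcon
    have hsub : Set.range P ⊆ {a, b} := by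
      intro v hv
      by_cases hva : v = a
      · exact Or.inl hva
      · exact Or.inr (hcon v hv hva)
    have h1 := Set.ncard_le_ncard hsub (Set.toFinite _)
    have h2 : ({a, b} : Set V).ncard ≤ 2 :=
      le_trans (Set.ncard_insert_le _ _) (by simp)
    omega
  obtain ⟨v, ⟨c, rfl⟩, hva, hvb⟩ := hvex
  have hvX : (P c : V) ∉ X := (p c : ↥Xᶜ).2
  have hkey : ∀ w₁ w₂ : V, w₁ ∉ X → w₂ ∉ X →
      G.Adj (P c) w₁ → G.Adj (P c) w₂ → w₁ = w₂ := by
    have step : ∀ w : V, (hw : w ∉ X) → G.Adj (P c) w →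
        ∃ hs : (⟨w, hw⟩ : ↥Xᶜ) ∈ c.1.supp,
          (H.induce c.1.supp).Adj (p c) ⟨⟨w, hw⟩, hs⟩ := by
      intro w hw hadj
      have hne : s(P c, w) ≠ s(a, b) := by
        intro hcontra
        rw [Sym2.eq_iff] at hcontra
        rcases hcontra with ⟨h1, _⟩ | ⟨h1, _⟩
        · exact hva h1
        · exact hvb h1
      have hG'adj : G'.Adj (P c) w := by
        rw [hG', SimpleGraph.deleteEdges_adj]
        exact ⟨hadj, by simpa using hne⟩
      have hHadj : H.Adj (p c : ↥Xᶜ) ⟨w, hw⟩ := hG'adj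
      have hs : (⟨w, hw⟩ : ↥Xᶜ) ∈ c.1.supp := by
        rw [SimpleGraph.ConnectedComponent.mem_supp_iff]
        have m1 : (p c : ↥Xᶜ) ∈ c.1.supp := (p c).2
        rw [SimpleGraph.ConnectedComponent.mem_supp_iff] at m1
        rw [← m1]
        exact (SimpleGraph.ConnectedComponent.connectedComponentMk_eq_of_adj hHadj).symm
      exact ⟨hs, hHadj⟩
    intro w₁ w₂ hw₁ hw₂ ha₁ ha₂
    obtain ⟨hs₁, hadj₁⟩ := step w₁ hw₁ ha₁
    obtain ⟨hs₂, hadj₂⟩ := step w₂ hw₂ ha₂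
    have heq := hp c _ _ hadj₁ hadj₂
    exact congrArg (fun z : ↥c.1.supp => ((z : ↥Xᶜ) : V)) heq
  have hdegv : G.degree (P c) = (G.neighborSet (P c)).ncard := by
    rw [← Nat.card_coe_set_eq, Nat.card_eq_fintype_card,
      SimpleGraph.card_neighborSet_eq_degree]
  have hNbound : (G.neighborSet (P c)).ncard ≤ X.ncard + 1 := by
    set N := G.neighborSet (P c) with hN
    have h1 : (N ∩ X).ncard ≤ X.ncard :=
      Set.ncard_le_ncard Set.inter_subset_right (Set.toFinite _)
    have h2 : (N \ X).ncard ≤ 1 := by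
      rw [Set.ncard_le_one (Set.toFinite _)]
      intro w₁ hw₁ w₂ hw₂
      exact hkey w₁ w₂ hw₁.2 hw₂.2 hw₁.1 hw₂.1
    calc N.ncard = ((N ∩ X) ∪ (N \ X)).ncard :=
          congrArg Set.ncard (Set.inter_union_diff N X).symm
      _ ≤ (N ∩ X).ncard + (N \ X).ncard := Set.ncard_union_le _ _
      _ ≤ X.ncard + 1 := Nat.add_le_add h1 h2
  calc G.minDegree ≤ G.degree (P c) := G.minDegree_le_degree _
    _ ≤ X.ncard + 1 := by rw [hdegv]; exact hNbound
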